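/- Assume s_c ∈ (s₀, ∞) satisfies ∫₀¹ (s_c² − 2Ω(p))^{-3/2} dp = 1, and set R_c = R(s_c) and R₀ = lim_{s→s₀+} R(s) ∈ (R_c, +∞]. Then: (a) for every r with R_c < r < R₀ the equation R(s) = r has exactly two solutions s₋(r) < s_c < s₊(r) in (s₀, ∞), and d(s₊(r)) < d(s₋(r)); (b) if R₀ < ∞, then for every r > R₀ the equation R(s) = r has exactly one solution s₊(r), and it lies in (s_c, ∞). -/

import Mathlib

open MeasureTheory Set Filter

noncomputable section

/-- `Omeg ω p = ∫₀^p ω(t) dt`, the primitive of the vorticity function. -/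
def Omeg (ω : ℝ → ℝ) (p : ℝ) : ℝ := ∫ t in (0:ℝ)..p, ω t

/-- `s0 ω = sqrt (max_{p ∈ [0,1]} 2 Ω(p))`. -/
def s0 (ω : ℝ → ℝ) : ℝ := Real.sqrt (sSup ((fun p => 2 * Omeg ω p) '' Icc (0:ℝ) 1))

/-- `Hp ω p s = (s² − 2Ω(p))^{-1/2}`. -/
def Hp (ω : ℝ → ℝ) (p s : ℝ) : ℝ := (Real.sqrt (s ^ 2 - 2 * Omeg ω p))⁻¹

/-- `Hfun ω p s = H(p; s) = ∫₀^p (s² − 2Ω(τ))^{-1/2} dτ`. -/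
def Hfun (ω : ℝ → ℝ) (p s : ℝ) : ℝ := ∫ τ in (0:ℝ)..p, Hp ω τ s

/-- `dd ω s = d(s) = H(1; s)`. -/
def dd (ω : ℝ → ℝ) (s : ℝ) : ℝ := Hfun ω 1 s

/-- `RR ω s = R(s) = s²/2 − Ω(1) + d(s)`, the Bernoulli constant of the stream solution. -/
def RR (ω : ℝ → ℝ) (s : ℝ) : ℝ := s ^ 2 / 2 - Omeg ω 1 + dd ω s

/-- `sigmaFun ω s r = σ(s; r)`. -/
def sigmaFun (ω : ℝ → ℝ) (s r : ℝ) : ℝ :=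
  ∫ p in (0:ℝ)..1,
    (1 / (2 * (Hp ω p s) ^ 2) - Hfun ω p s - Omeg ω p + Omeg ω 1 + r) * Hp ω p s

/-- Partial derivative in the first (horizontal) variable `q`. -/
def dq (f : ℝ → ℝ → ℝ) (q p : ℝ) : ℝ := deriv (fun x => f x p) q

/-- Partial derivative in the second (vertical) variable `p`. -/
def dp (f : ℝ → ℝ → ℝ) (q p : ℝ) : ℝ := deriv (fun y => f q y) p

/-- The height system with Bernoulli constant `r` on the strip `S = ℝ × [0,1]`. -/
structure HeightSol (ω : ℝ → ℝ) (r : ℝ) (h : ℝ → ℝ → ℝ) : Prop where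
  smooth : ContDiff ℝ 2 (Function.uncurry h)
  hp_pos : ∀ q : ℝ, ∀ p ∈ Icc (0:ℝ) 1, 0 < dp h q p
  pde : ∀ q : ℝ, ∀ p ∈ Icc (0:ℝ) 1,
    (1 + (dq h q p) ^ 2) / (dp h q p) ^ 2 * dp (dp h) q p
      - 2 * (dq h q p) / (dp h q p) * dp (dq h) q p
      + dq (dq h) q p - ω p * dp h q p = 0
  top : ∀ q : ℝ, (1 + (dq h q 1) ^ 2) / (2 * (dp h q 1) ^ 2) + h q 1 = r
  bot : ∀ q : ℝ, h q 0 = 0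

/-- The flow force of a height function `h`, computed on the vertical line through `q`. -/
def flowForce (ω : ℝ → ℝ) (r : ℝ) (h : ℝ → ℝ → ℝ) (q : ℝ) : ℝ :=
  ∫ p in (0:ℝ)..1,
    ((1 - (dq h q p) ^ 2) / (2 * (dp h q p) ^ 2) - h q p - Omeg ω p + Omeg ω 1 + r) * dp h q p

/-- `wfun ω s h = w^{(s)} = h − H(·; s)`. -/
def wfun (ω : ℝ → ℝ) (s : ℝ) (h : ℝ → ℝ → ℝ) (q p : ℝ) : ℝ := h q p - Hfun ω p s

/-- The flow force flux function `Φ^{(s)}`. -/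
def Phi (ω : ℝ → ℝ) (s : ℝ) (h : ℝ → ℝ → ℝ) (q p : ℝ) : ℝ :=
  ∫ p' in (0:ℝ)..p,
    ((dp (wfun ω s h) q p') ^ 2 / (dp h q p' * (Hp ω p' s) ^ 2)
      - (dq (wfun ω s h) q p') ^ 2 / dp h q p')

/-- `h ∈ C^{2,γ}(S̄)`: `h` is twice continuously differentiable, all partial derivatives of
order ≤ 2 are bounded on the strip, and the second-order derivatives are uniformly
γ-Hölder continuous on the strip. -/
def C2Holder (γ : ℝ) (h : ℝ → ℝ → ℝ) : Prop :=
  ContDiff ℝ 2 (Function.uncurry h) ∧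
  (∀ g ∈ ([h, dq h, dp h, dq (dq h), dp (dq h), dp (dp h)] : List (ℝ → ℝ → ℝ)),
    ∃ M : ℝ, ∀ q : ℝ, ∀ p ∈ Icc (0:ℝ) 1, |g q p| ≤ M) ∧
  (∀ g ∈ ([dq (dq h), dp (dq h), dp (dp h)] : List (ℝ → ℝ → ℝ)),
    ∃ C : ℝ, ∀ q q' : ℝ, ∀ p ∈ Icc (0:ℝ) 1, ∀ p' ∈ Icc (0:ℝ) 1,
      |g q p - g q' p'| ≤ C * Real.sqrt ((q - q') ^ 2 + (p - p') ^ 2) ^ γ)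

end

section Aux

variable {ω : ℝ → ℝ}

lemma omeg_cont (hω : Continuous ω) : Continuous (Omeg ω) :=
  intervalIntegral.continuous_primitive (fun a b => hω.intervalIntegrable a b) 0

lemma s0_nonneg (ω : ℝ → ℝ) : 0 ≤ s0 ω := Real.sqrt_nonneg _

lemma sSup_nonneg' (hω : Continuous ω) :
    0 ≤ sSup ((fun p => 2 * Omeg ω p) '' Icc (0:ℝ) 1) := by
  have h0 : (0:ℝ) ∈ (fun p => 2 * Omeg ω p) '' Icc (0:ℝ) 1 :=
    ⟨0, by simp, by simp [Omeg]⟩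
  exact le_csSup ((isCompact_Icc.image
    (continuous_const.mul (omeg_cont hω))).bddAbove) h0

lemma s0_sq (hω : Continuous ω) :
    (s0 ω) ^ 2 = sSup ((fun p => 2 * Omeg ω p) '' Icc (0:ℝ) 1) :=
  Real.sq_sqrt (sSup_nonneg' hω)

lemma two_omeg_le (hω : Continuous ω) {p : ℝ} (hp : p ∈ Icc (0:ℝ) 1) :
    2 * Omeg ω p ≤ (s0 ω) ^ 2 := by
  rw [s0_sq hω]
  exact le_csSup ((isCompact_Icc.image
    (continuous_const.mul (omeg_cont hω))).bddAbove) ⟨p, hp, rfl⟩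

lemma sq_lt_of_s0_lt {s : ℝ} (hs : s0 ω < s) : (s0 ω) ^ 2 < s ^ 2 := by
  nlinarith [s0_nonneg ω]

lemma sub_pos_of_mem (hω : Continuous ω) {s p : ℝ} (hs : s0 ω < s)
    (hp : p ∈ Icc (0:ℝ) 1) : 0 < s ^ 2 - 2 * Omeg ω p := by
  have := two_omeg_le hω hp
  have := sq_lt_of_s0_lt hs
  linarith

lemma hp_pos (hω : Continuous ω) {s p : ℝ} (hs : s0 ω < s) (hp : p ∈ Icc (0:ℝ) 1) :
    0 < Hp ω p s :=
  inv_pos.2 (Real.sqrt_pos.2 (sub_pos_of_mem hω hs hp))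

lemma contOn_Hp (hω : Continuous ω) {s : ℝ} (hs : s0 ω < s) :
    ContinuousOn (fun p => Hp ω p s) (Icc (0:ℝ) 1) := by
  apply ContinuousOn.inv₀
  · exact (Real.continuous_sqrt.comp
      (continuous_const.sub (continuous_const.mul (omeg_cont hω)))).continuousOn
  · intro p hp
    exact (Real.sqrt_pos.2 (sub_pos_of_mem hω hs hp)).ne'

lemma meas_Hp (hω : Continuous ω) (x : ℝ) : Measurable (fun p => Hp ω p x) :=
  (Real.continuous_sqrt.comp
    (continuous_const.sub (continuous_const.mul (omeg_cont hω)))).measurable.inv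

lemma intInt_Hp (hω : Continuous ω) {s : ℝ} (hs : s0 ω < s) :
    IntervalIntegrable (fun p => Hp ω p s) volume 0 1 := by
  apply ContinuousOn.intervalIntegrable
  rw [uIcc_of_le (zero_le_one)]
  exact contOn_Hp hω hs

lemma hasDerivAt_aux {c x : ℝ} (hx : 0 < x ^ 2 - c) :
    HasDerivAt (fun y => (Real.sqrt (y ^ 2 - c))⁻¹)
      (-(x * ((Real.sqrt (x ^ 2 - c))⁻¹) ^ 3)) x := by
  have hu : HasDerivAt (fun y : ℝ => y ^ 2 - c) (2 * x) x := by
    simpa using (hasDerivAt_pow 2 x).sub_const c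
  have hsq : Real.sqrt (x ^ 2 - c) ≠ 0 := (Real.sqrt_pos.2 hx).ne'
  have h1 : HasDerivAt (fun y => Real.sqrt (y ^ 2 - c))
      (1 / (2 * Real.sqrt (x ^ 2 - c)) * (2 * x)) x :=
    (Real.hasDerivAt_sqrt hx.ne').comp x hu
  have h2 : HasDerivAt (fun y => (Real.sqrt (y ^ 2 - c))⁻¹) _ x := h1.inv hsq
  convert h2 using 1
  have h3 : Real.sqrt (x ^ 2 - c) ^ 3 = (x ^ 2 - c) * Real.sqrt (x ^ 2 - c) := by
    rw [pow_succ, Real.sq_sqrt hx.le]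
  field_simp

lemma dd_eq (ω : ℝ → ℝ) : dd ω = fun s => ∫ p in (0:ℝ)..1, Hp ω p s := rfl

lemma hasDerivAt_dd (hω : Continuous ω) {s : ℝ} (hs : s0 ω < s) :
    HasDerivAt (dd ω) (-(s * ∫ p in (0:ℝ)..1, (Hp ω p s) ^ 3)) s := by
  set ε := (s - s0 ω) / 2 with hεdef
  have hε0 : 0 < ε := by simp [hεdef]; linarith
  have hlow : s0 ω < s - ε := by simp [hεdef]; linarith
  have h0le : 0 ≤ s - ε := (s0_nonneg ω).trans hlow.le
  have hpos2 : 0 < (s - ε) ^ 2 - (s0 ω) ^ 2 := by nlinarith [s0_nonneg ω]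
  have hball : ∀ x ∈ Metric.ball s ε, s - ε < x ∧ x < s + ε := by
    intro x hx
    rw [Metric.mem_ball, Real.dist_eq, abs_lt] at hx
    constructor <;> linarith [hx.1, hx.2]
  have hkey : ∀ x ∈ Metric.ball s ε, ∀ p ∈ Icc (0:ℝ) 1,
      0 < x ^ 2 - 2 * Omeg ω p := by
    intro x hx p hp
    exact sub_pos_of_mem hω ((hball x hx).1.trans' hlow) hp
  have H := intervalIntegral.hasDerivAt_integral_of_dominated_loc_of_deriv_le
    (F := fun x p => Hp ω p x) (F' := fun x p => -(x * (Hp ω p x) ^ 3))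
    (bound := fun _ => (s + ε) * ((Real.sqrt ((s - ε) ^ 2 - (s0 ω) ^ 2))⁻¹) ^ 3)
    (μ := volume) (a := 0) (b := 1) (x₀ := s) (Metric.ball_mem_nhds s hε0)
    (Eventually.of_forall fun x => (meas_Hp hω x).aestronglyMeasurable)
    (intInt_Hp hω hs)
    (((((meas_Hp hω s).pow_const 3).const_mul s).neg).aestronglyMeasurable)
    ?_ intervalIntegrable_const ?_
  · have heq : (∫ p in (0:ℝ)..1, -(s * (Hp ω p s) ^ 3))
        = -(s * ∫ p in (0:ℝ)..1, (Hp ω p s) ^ 3) := by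
      rw [intervalIntegral.integral_neg, intervalIntegral.integral_const_mul]
    rw [dd_eq ω]
    exact heq ▸ H.2
  · -- bound
    refine Eventually.of_forall fun p hp x hx => ?_
    have hpIcc : p ∈ Icc (0:ℝ) 1 := Ioc_subset_Icc_self (by rwa [uIoc_of_le zero_le_one] at hp)
    have hxb := hball x hx
    have hx0 : 0 < x := lt_of_le_of_lt ((s0_nonneg ω).trans hlow.le) hxb.1
    have hxpos := hkey x hx p hpIcc
    have hle1 : (s - ε) ^ 2 - (s0 ω) ^ 2 ≤ x ^ 2 - 2 * Omeg ω p := by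
      have h1 : (s - ε) ^ 2 ≤ x ^ 2 := by nlinarith
      have h2 := two_omeg_le hω hpIcc
      linarith
    have hHple : Hp ω p x ≤ (Real.sqrt ((s - ε) ^ 2 - (s0 ω) ^ 2))⁻¹ := by
      apply inv_anti₀ (Real.sqrt_pos.2 hpos2)
      exact Real.sqrt_le_sqrt hle1
    have hHp0 : 0 < Hp ω p x := inv_pos.2 (Real.sqrt_pos.2 hxpos)
    rw [Real.norm_eq_abs, abs_neg, abs_of_pos (by positivity)]
    exact mul_le_mul hxb.2.le (pow_le_pow_left₀ hHp0.le hHple 3) (pow_nonneg hHp0.le 3) (hx0.trans hxb.2).le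
  · -- differentiability
    refine Eventually.of_forall fun p hp x hx => ?_
    have hpIcc : p ∈ Icc (0:ℝ) 1 := Ioc_subset_Icc_self (by rwa [uIoc_of_le zero_le_one] at hp)
    exact hasDerivAt_aux (hkey x hx p hpIcc)

lemma hasDerivAt_RR (hω : Continuous ω) {s : ℝ} (hs : s0 ω < s) :
    HasDerivAt (RR ω) (s * (1 - ∫ p in (0:ℝ)..1, (Hp ω p s) ^ 3)) s := by
  have h1 : HasDerivAt (fun s : ℝ => s ^ 2 / 2 - Omeg ω 1) s s := by
    have := ((hasDerivAt_pow 2 s).div_const 2).sub_const (Omeg ω 1)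
    exact this.congr_deriv (by norm_num)
  have h2 := (h1.add (hasDerivAt_dd hω hs))
  have h3 : RR ω = fun s => (s ^ 2 / 2 - Omeg ω 1) + dd ω s := rfl
  rw [h3]
  exact h2.congr_deriv (by ring)

lemma I_strictAnti (hω : Continuous ω) {s1 s2 : ℝ} (h1 : s0 ω < s1) (h12 : s1 < s2) :
    (∫ p in (0:ℝ)..1, (Hp ω p s2) ^ 3) < ∫ p in (0:ℝ)..1, (Hp ω p s1) ^ 3 := by
  have hlt : ∀ p ∈ Icc (0:ℝ) 1, Hp ω p s2 < Hp ω p s1 := by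
    intro p hp
    have hp1 := sub_pos_of_mem hω h1 hp
    have hsq : s1 ^ 2 < s2 ^ 2 := by nlinarith [(s0_nonneg ω).trans h1.le]
    have : Real.sqrt (s1 ^ 2 - 2 * Omeg ω p) < Real.sqrt (s2 ^ 2 - 2 * Omeg ω p) :=
      Real.sqrt_lt_sqrt hp1.le (by linarith)
    exact inv_strictAnti₀ (Real.sqrt_pos.2 hp1) this
  apply intervalIntegral.integral_lt_integral_of_continuousOn_of_le_of_exists_lt zero_lt_one
    ((contOn_Hp hω (h1.trans h12)).pow 3) ((contOn_Hp hω h1).pow 3)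
  · intro p hp
    have hpIcc := Ioc_subset_Icc_self hp
    exact pow_le_pow_left₀ (hp_pos hω (h1.trans h12) hpIcc).le (hlt p hpIcc).le 3
  · refine ⟨0, by simp, ?_⟩
    have h0 : (0:ℝ) ∈ Icc (0:ℝ) 1 := by simp
    exact pow_lt_pow_left₀ (hlt 0 h0) (hp_pos hω (h1.trans h12) h0).le (by norm_num)

lemma dd_pos (hω : Continuous ω) {s : ℝ} (hs : s0 ω < s) : 0 < dd ω s := by
  rw [dd_eq]
  exact intervalIntegral.intervalIntegral_pos_of_pos_on (intInt_Hp hω hs)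
    (fun p hp => hp_pos hω hs (Ioo_subset_Icc_self hp)) zero_lt_one

lemma contOn_RR (hω : Continuous ω) : ContinuousOn (RR ω) (Ioi (s0 ω)) :=
  fun s hs => ((hasDerivAt_RR hω hs).continuousAt).continuousWithinAt

lemma RR_atTop (hω : Continuous ω) : Tendsto (RR ω) atTop atTop := by
  apply tendsto_atTop_mono' atTop
    (f₁ := fun s => s ^ 2 / 2 - Omeg ω 1)
  · filter_upwards [eventually_gt_atTop (s0 ω)] with s hs
    have := dd_pos hω hs
    simp only [RR]
    linarith
  · have h1 : Tendsto (fun s : ℝ => s ^ 2) atTop atTop := tendsto_pow_atTop two_ne_zero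
    have h2 := h1.atTop_div_const (by norm_num : (0:ℝ) < 2)
    simpa [sub_eq_add_neg] using tendsto_atTop_add_const_right atTop (-(Omeg ω 1)) h2

end Aux

section Mono

variable {ω : ℝ → ℝ} {sc : ℝ}

lemma RR_mono (hω : Continuous ω) (hsc : s0 ω < sc)
    (hI : (∫ p in (0:ℝ)..1, (Hp ω p sc) ^ 3) = 1) :
    StrictMonoOn (RR ω) (Ici sc) := by
  apply strictMonoOn_of_deriv_pos (convex_Ici sc)
    ((contOn_RR hω).mono (fun x hx => lt_of_lt_of_le hsc hx))
  intro x hx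
  rw [interior_Ici] at hx
  rw [(hasDerivAt_RR hω (hsc.trans hx)).deriv]
  have hlt := I_strictAnti hω hsc hx
  rw [hI] at hlt
  have hx0 : 0 < x := lt_of_le_of_lt (s0_nonneg ω) (hsc.trans hx)
  exact mul_pos hx0 (by linarith)

lemma RR_anti (hω : Continuous ω) (hsc : s0 ω < sc)
    (hI : (∫ p in (0:ℝ)..1, (Hp ω p sc) ^ 3) = 1) :
    StrictAntiOn (RR ω) (Ioc (s0 ω) sc) := by
  apply strictAntiOn_of_deriv_neg (convex_Ioc _ _)
    ((contOn_RR hω).mono Ioc_subset_Ioi_self)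
  intro x hx
  rw [interior_Ioc] at hx
  rw [(hasDerivAt_RR hω hx.1).deriv]
  have hlt := I_strictAnti hω hx.1 hx.2
  rw [hI] at hlt
  have hx0 : 0 < x := lt_of_le_of_lt (s0_nonneg ω) hx.1
  exact mul_neg_of_pos_of_neg hx0 (by linarith)

lemma exists_sp (hω : Continuous ω) (hsc : s0 ω < sc) {r : ℝ} (hr : RR ω sc < r) :
    ∃ sp : ℝ, sc < sp ∧ RR ω sp = r := by
  obtain ⟨b, hb1, hb2⟩ :=
    (((RR_atTop hω).eventually_gt_atTop r).and (eventually_gt_atTop sc)).exists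
  have hsub := intermediate_value_Icc hb2.le
    ((contOn_RR hω).mono (fun x hx => lt_of_lt_of_le hsc hx.1))
  obtain ⟨sp, hsp, hspr⟩ := hsub ⟨hr.le, hb1.le⟩
  refine ⟨sp, lt_of_le_of_ne hsp.1 ?_, hspr⟩
  intro h
  exact hr.ne (h ▸ hspr)

end Mono


/-- with `s_c` critical, `R_c = R(s_c)` and `R₀ = lim_{s→s₀+} R(s) ∈ (R_c, +∞]`:
(a) for `R_c < r < R₀` the equation `R(s) = r` has exactly two solutions
`s₋(r) < s_c < s₊(r)` in `(s₀, ∞)`, and `d(s₊(r)) < d(s₋(r))`;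
(b) if `R₀ < ∞`, then for every `r > R₀` there is exactly one solution, lying in `(s_c, ∞)`. -/
theorem stmt6 (ω : ℝ → ℝ) (hω : Continuous ω)
    (sc : ℝ) (hsc : sc ∈ Ioi (s0 ω))
    (hI : (∫ p in (0:ℝ)..1, (Hp ω p sc) ^ 3) = 1)
    (R0 : EReal)
    (hR0 : Tendsto (fun s => (RR ω s : EReal)) (nhdsWithin (s0 ω) (Ioi (s0 ω))) (nhds R0))
    (hRcR0 : (RR ω sc : EReal) < R0) :
    (∀ r : ℝ, RR ω sc < r → (r : EReal) < R0 →
      ∃ sm sp : ℝ, sm ∈ Ioi (s0 ω) ∧ sp ∈ Ioi (s0 ω) ∧ sm < sc ∧ sc < sp ∧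
        RR ω sm = r ∧ RR ω sp = r ∧ dd ω sp < dd ω sm ∧
        (∀ s ∈ Ioi (s0 ω), RR ω s = r → s = sm ∨ s = sp)) ∧
    (R0 ≠ ⊤ → ∀ r : ℝ, R0 < (r : EReal) →
      ∃ sp : ℝ, sp ∈ Ioi sc ∧ RR ω sp = r ∧
        (∀ s ∈ Ioi (s0 ω), RR ω s = r → s = sp)) := by
  have hsc' : s0 ω < sc := hsc
  have hanti := RR_anti hω hsc' hI
  have hmono := RR_mono hω hsc' hI
  constructor
  · intro r hr1 hr2
    -- find a point a near s0 with r < RR a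
    have h1 : ∀ᶠ s in nhdsWithin (s0 ω) (Ioi (s0 ω)),
        (r : EReal) < (RR ω s : EReal) := hR0.eventually_const_lt hr2
    have h2 : ∀ᶠ s in nhdsWithin (s0 ω) (Ioi (s0 ω)), s ∈ Ioo (s0 ω) sc :=
      eventually_of_mem (Ioo_mem_nhdsGT_of_mem ⟨le_refl _, hsc'⟩) (fun _ h => h)
    obtain ⟨a, ha1, ha2⟩ := (h1.and h2).exists
    have ha1' : r < RR ω a := by exact_mod_cast ha1
    -- sm by IVT on [a, sc]
    obtain ⟨sm, hsm, hsmr⟩ := intermediate_value_Icc' ha2.2.le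
      ((contOn_RR hω).mono (fun x hx => lt_of_lt_of_le ha2.1 hx.1))
      (⟨hr1.le, ha1'.le⟩ : r ∈ Icc (RR ω sc) (RR ω a))
    have hsm0 : s0 ω < sm := lt_of_lt_of_le ha2.1 hsm.1
    have hsmlt : sm < sc := lt_of_le_of_ne hsm.2 (fun h => hr1.ne (h ▸ hsmr))
    -- sp by IVT on the right
    obtain ⟨sp, hsplt, hspr⟩ := exists_sp hω hsc' hr1
    have hsp0 : s0 ω < sp := hsc'.trans hsplt
    refine ⟨sm, sp, hsm0, hsp0, hsmlt, hsplt, hsmr, hspr, ?_, ?_⟩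
    · -- dd sp < dd sm
      have hEq : RR ω sm = RR ω sp := by rw [hsmr, hspr]
      have hsm_pos : 0 ≤ sm := (s0_nonneg ω).trans hsm0.le
      have hsq : sm ^ 2 < sp ^ 2 := by nlinarith [hsmlt.trans hsplt]
      simp only [RR] at hEq
      linarith
    · intro s hs hsr
      rcases lt_trichotomy s sc with h | h | h
      · left
        exact hanti.injOn ⟨hs, h.le⟩ ⟨hsm0, hsmlt.le⟩ (by rw [hsr, hsmr])
      · subst h
        exact absurd hsr hr1.ne
      · right
        exact hmono.injOn h.le (hsplt.le : sp ∈ Ici sc) (by rw [hsr, hspr])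
  · intro _ r hr
    have hrc : RR ω sc < r := by exact_mod_cast hRcR0.trans hr
    obtain ⟨sp, hsplt, hspr⟩ := exists_sp hω hsc' hrc
    refine ⟨sp, hsplt, hspr, ?_⟩
    intro s hs hsr
    have hgt : sc < s := by
      by_contra hle
      push_neg at hle
      have hsIoc : s ∈ Ioc (s0 ω) sc := ⟨hs, hle⟩
      have hle0 : (RR ω s : EReal) ≤ R0 := by
        apply ge_of_tendsto hR0
        filter_upwards [eventually_of_mem
          (Ioo_mem_nhdsGT_of_mem (⟨le_refl _, hs⟩ : s0 ω ∈ Ico (s0 ω) s))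
          (fun _ h => h)] with s' hs'
        exact_mod_cast (hanti ⟨hs'.1, hs'.2.le.trans hle⟩ hsIoc hs'.2).le
      have : (RR ω s : EReal) < (r : EReal) := lt_of_le_of_lt hle0 hr
      exact (by exact_mod_cast this.ne : RR ω s ≠ r) hsr
    exact hmono.injOn hgt.le (hsplt.le : sp ∈ Ici sc) (by rw [hsr, hspr])
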